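/- arXiv:1001.0177 — 4 statements merged into one kernel-verified Lean document; each statement's English description precedes it below -/
import Mathlib

section
/- Let M be a module over ℤ with a symmetric bilinear form ⟨·,·⟩, let n be a natural number, and let Γ, E₁, …, Eₙ ∈ M satisfy ⟨Γ,Γ⟩ = −1, ⟨Eⱼ,Eⱼ⟩ = −2 for all j, ⟨Γ,E₁⟩ = 1, ⟨Γ,Eⱼ⟩ = 0 for j ≥ 2, ⟨Eⱼ,Eₖ⟩ = 1 whenever |j−k| = 1, and ⟨Eⱼ,Eₖ⟩ = 0 whenever |j−k| ≥ 2. Then the element D = (n+1)·Γ + Σ_{j=1}^{n} (n−j+1)·Eⱼ satisfies ⟨D,D⟩ = −(n+1). -/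
private def v (j k : ℕ) : ℤ := if j = k then -2 else if j + 1 = k ∨ k + 1 = j then 1 else 0

private lemma v_symm (j k : ℕ) : v j k = v k j := by
  unfold v; split_ifs <;> omega

private lemma edge (m : ℤ) (n : ℕ) :
    ∑ j ∈ Finset.range n, (m - j) * v j n = if n = 0 then 0 else m - n + 1 := by
  cases n with
  | zero => simp
  | succ n =>
    rw [Finset.sum_eq_single_of_mem n (Finset.self_mem_range_succ n)]
    · have : v n (n+1) = 1 := by unfold v; split_ifs <;> omega
      rw [this]; push_cast; simp; ring
    · intro b hb hbn
      have : v b (n+1) = 0 := by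
        unfold v
        have := Finset.mem_range.mp hb
        split_ifs <;> omega
      rw [this, mul_zero]

private lemma first (m : ℤ) (n : ℕ) :
    ∑ j ∈ Finset.range n, (m - j) * (if j = 0 then (1:ℤ) else 0) =
      if n = 0 then 0 else m := by
  cases n with
  | zero => simp
  | succ n =>
    rw [Finset.sum_eq_single_of_mem 0 (Finset.mem_range.mpr (Nat.succ_pos n))]
    · simp
    · intro b hb hbn; simp [hbn]

private lemma key (m : ℤ) (n : ℕ) :
    ∑ j ∈ Finset.range n, ∑ k ∈ Finset.range n, (m - j) * (m - k) * v j k =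
      if n = 0 then 0
      else -2*(m - n + 1)^2 - 2*((n:ℤ)-1)*m + ((n:ℤ)-1)*((n:ℤ)-2) := by
  induction n with
  | zero => simp
  | succ n ih =>
    simp only [Finset.sum_range_succ]
    rw [Finset.sum_add_distrib, ih]
    have h1 : ∑ j ∈ Finset.range n, (m - j) * (m - n) * v j n
        = (m - n) * (if n = 0 then 0 else m - n + 1) := by
      rw [← edge m n, Finset.mul_sum]
      exact Finset.sum_congr rfl fun j _ => by ring
    have h2 : ∑ k ∈ Finset.range n, (m - n) * (m - k) * v n k
        = (m - n) * (if n = 0 then 0 else m - n + 1) := by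
      rw [← edge m n, Finset.mul_sum]
      refine Finset.sum_congr rfl fun k _ => ?_
      rw [v_symm]; ring
    have h3 : v n n = -2 := by unfold v; simp
    rw [h1, h2, h3]
    cases n with
    | zero => simp; ring
    | succ n => simp only [Nat.succ_ne_zero, if_false]; push_cast; ring

/-- Self-intersection of one summand `(n+1)Γ + Σ_{j=1}^{n} (n−j+1)E_j` of the negative
part of the Zariski–Fujita decomposition of `C + 2K_S`:
`Γ` is a `(-1)`-curve, `E₁,…,Eₙ` a chain of `(-2)`-curves attached to it. -/
theorem stmt_0 {M : Type*} [AddCommGroup M] [Module ℤ M]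
    (B : LinearMap.BilinForm ℤ M) (hsymm : B.IsSymm)
    (n : ℕ) (Γ : M) (E : Fin n → M)
    (hΓ : B Γ Γ = -1)
    (hE : ∀ j : Fin n, B (E j) (E j) = -2)
    (hΓE1 : ∀ j : Fin n, (j : ℕ) = 0 → B Γ (E j) = 1)
    (hΓEj : ∀ j : Fin n, 1 ≤ (j : ℕ) → B Γ (E j) = 0)
    (hadj : ∀ j k : Fin n, ((j : ℕ) + 1 = (k : ℕ) ∨ (k : ℕ) + 1 = (j : ℕ)) →
      B (E j) (E k) = 1)
    (hfar : ∀ j k : Fin n, ((j : ℕ) + 2 ≤ (k : ℕ) ∨ (k : ℕ) + 2 ≤ (j : ℕ)) →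
      B (E j) (E k) = 0) :
    B (((n : ℤ) + 1) • Γ + ∑ j : Fin n, ((n : ℤ) - (j : ℕ)) • E j)
      (((n : ℤ) + 1) • Γ + ∑ j : Fin n, ((n : ℤ) - (j : ℕ)) • E j)
      = -((n : ℤ) + 1) := by
  have hw : ∀ j : Fin n, B Γ (E j) = if (j : ℕ) = 0 then 1 else 0 := by
    intro j; split_ifs with h
    · exact hΓE1 j h
    · exact hΓEj j (by omega)
  have hw' : ∀ j : Fin n, B (E j) Γ = if (j : ℕ) = 0 then 1 else 0 := by
    intro j
    have := hsymm.eq (E j) Γ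
    rw [this]
    exact hw j
  have hv : ∀ j k : Fin n, B (E j) (E k) = v (j : ℕ) (k : ℕ) := by
    intro j k; unfold v; split_ifs with h1 h2
    · have : j = k := Fin.ext h1
      subst this; exact hE j
    · exact hadj j k h2
    · exact hfar j k (by omega)
  simp only [← Int.cast_smul_eq_zsmul ℤ, Int.cast_id]
  simp only [LinearMap.BilinForm.add_left, LinearMap.BilinForm.add_right,
    LinearMap.BilinForm.smul_left, LinearMap.BilinForm.smul_right,
    LinearMap.BilinForm.sum_left, LinearMap.BilinForm.sum_right]
  simp only [hΓ, hw, hw', hv]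
  have e2 : ∀ x : Fin n, (∑ y : Fin n, ((n:ℤ) - (y:ℕ)) * v (y:ℕ) (x:ℕ))
      = ∑ k ∈ Finset.range n, ((n:ℤ) - k) * v k (x:ℕ) :=
    fun x => Fin.sum_univ_eq_sum_range (fun i => ((n:ℤ) - i) * v i (x:ℕ)) n
  simp only [e2]
  rw [Fin.sum_univ_eq_sum_range
    (fun j => ((n:ℤ) - j) * (if j = 0 then (1:ℤ) else 0)) n]
  rw [Fin.sum_univ_eq_sum_range
    (fun j => ((n:ℤ) - j) * (((n:ℤ)+1) * (if j = 0 then (1:ℤ) else 0)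
      + ∑ k ∈ Finset.range n, ((n:ℤ) - k) * v k j)) n]
  have split : ∑ j ∈ Finset.range n, ((n:ℤ) - j) * (((n:ℤ)+1) * (if j = 0 then (1:ℤ) else 0)
        + ∑ k ∈ Finset.range n, ((n:ℤ) - k) * v k j)
      = ((n:ℤ)+1) * (∑ j ∈ Finset.range n, ((n:ℤ) - j) * (if j = 0 then (1:ℤ) else 0))
        + ∑ j ∈ Finset.range n, ∑ k ∈ Finset.range n, ((n:ℤ) - j) * ((n:ℤ) - k) * v j k := by
    rw [Finset.mul_sum, ← Finset.sum_add_distrib]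
    refine Finset.sum_congr rfl fun j hj => ?_
    rw [mul_add, Finset.mul_sum]
    congr 1
    · ring
    · exact Finset.sum_congr rfl fun k hk => by rw [v_symm]; ring
  rw [split, first, key]
  cases n with
  | zero => norm_num
  | succ n => simp only [Nat.succ_ne_zero, if_false]; push_cast; ring
end

section
/- Let M be a module over ℤ with a symmetric bilinear form ⟨·,·⟩. Let s be a natural number, l : Fin s → ℕ, and let Γᵢ ∈ M (for i = 1,…,s) and E_{i,1},…,E_{i,l(i)} ∈ M satisfy: ⟨Γᵢ,Γᵢ⟩ = −1; ⟨E_{i,j},E_{i,j}⟩ = −2; within each chain i, ⟨Γᵢ,E_{i,1}⟩ = 1, ⟨Γᵢ,E_{i,j}⟩ = 0 for j ≥ 2, ⟨E_{i,j},E_{i,k}⟩ = 1 if |j−k| = 1 and 0 if |j−k| ≥ 2; and all pairings between elements belonging to different indices i are zero (⟨Γᵢ,Γₖ⟩ = 0, ⟨Γᵢ,E_{k,j}⟩ = 0, ⟨E_{i,j},E_{k,j'}⟩ = 0 for i ≠ k). Then N₁ := Σ_{i=1}^{s} [ (l(i)+1)·Γᵢ + Σ_{j=1}^{l(i)} (l(i)−j+1)·E_{i,j}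 ] satisfies ⟨N₁,N₁⟩ = −Σ_{i=1}^{s} (l(i)+1). -/
def gg (j k : ℕ) : ℤ := if j = k then -2 else if j + 1 = k ∨ k + 1 = j then 1 else 0

lemma gg_symm (j k : ℕ) : gg j k = gg k j := by
  simp only [gg]; split_ifs <;> omega

lemma gg_row (n : ℕ) : ∑ j ∈ Finset.range n, ((j:ℤ)+1) * gg j n = n := by
  cases n with
  | zero => simp
  | succ m =>
    have h : ∀ j ∈ Finset.range (m+1), ((j:ℤ)+1) * gg j (m+1)
        = if j = m then ((m:ℤ)+1) else 0 := by
      intro j hj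
      simp only [Finset.mem_range] at hj
      by_cases h : j = m
      · have : gg j (m+1) = 1 := by simp only [gg]; split_ifs <;> omega
        rw [this, if_pos h, h]; ring
      · have : gg j (m+1) = 0 := by simp only [gg]; split_ifs <;> omega
        rw [this, if_neg h]; ring
    rw [Finset.sum_congr rfl h, Finset.sum_ite_eq' (Finset.range (m+1)) m (fun _ => ((m:ℤ)+1))]
    simp

lemma sumA (n : ℕ) :
    ∑ j ∈ Finset.range n, ∑ k ∈ Finset.range n, ((j:ℤ)+1)*((k:ℤ)+1)*gg j k
      = -(n*(n+1)) := by
  induction n with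
  | zero => simp
  | succ m ih =>
    rw [Finset.sum_range_succ]
    have inner : ∀ j ∈ Finset.range m,
        ∑ k ∈ Finset.range (m+1), ((j:ℤ)+1)*((k:ℤ)+1)*gg j k
        = (∑ k ∈ Finset.range m, ((j:ℤ)+1)*((k:ℤ)+1)*gg j k)
          + ((j:ℤ)+1)*((m:ℤ)+1)*gg j m := by
      intro j hj; rw [Finset.sum_range_succ]
    rw [Finset.sum_congr rfl inner, Finset.sum_add_distrib, ih, Finset.sum_range_succ]
    have hcol : ∑ j ∈ Finset.range m, ((j:ℤ)+1)*((m:ℤ)+1)*gg j m = ((m:ℤ)+1) * m := by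
      rw [show (∑ j ∈ Finset.range m, ((j:ℤ)+1)*((m:ℤ)+1)*gg j m)
          = ((m:ℤ)+1) * ∑ j ∈ Finset.range m, ((j:ℤ)+1)*gg j m from by
        rw [Finset.mul_sum]; exact Finset.sum_congr rfl fun j _ => by ring, gg_row]
    have hrow : ∑ k ∈ Finset.range m, ((m:ℤ)+1)*((k:ℤ)+1)*gg m k = ((m:ℤ)+1) * m := by
      rw [show (∑ k ∈ Finset.range m, ((m:ℤ)+1)*((k:ℤ)+1)*gg m k)
          = ((m:ℤ)+1) * ∑ k ∈ Finset.range m, ((k:ℤ)+1)*gg k m from by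
        rw [Finset.mul_sum]; exact Finset.sum_congr rfl fun k _ => by rw [gg_symm]; ring, gg_row]
    have hmm : gg m m = -2 := by simp [gg]
    rw [hcol, hrow, hmm]; push_cast; ring

lemma sumA' (n : ℕ) :
    ∑ j ∈ Finset.range n, ∑ k ∈ Finset.range n, ((n:ℤ)-(j:ℕ))*((n:ℤ)-(k:ℕ))*gg j k
      = -(n*(n+1)) := by
  rw [← sumA n, ← Finset.sum_range_reflect]
  refine Finset.sum_congr rfl fun j hj => ?_
  rw [← Finset.sum_range_reflect]
  refine Finset.sum_congr rfl fun k hk => ?_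
  simp only [Finset.mem_range] at hj hk
  have hg : gg j k = gg (n-1-j) (n-1-k) := by simp only [gg]; split_ifs <;> omega
  have hj' : ((n:ℤ) - ((n-1-j : ℕ):ℤ)) = (j:ℤ)+1 := by
    have : ((n-1-j : ℕ):ℤ) = (n:ℤ) - 1 - j := by push_cast [Nat.cast_sub] <;> omega
    rw [this]; ring
  have hk' : ((n:ℤ) - ((n-1-k : ℕ):ℤ)) = (k:ℤ)+1 := by
    have : ((n-1-k : ℕ):ℤ) = (n:ℤ) - 1 - k := by push_cast [Nat.cast_sub] <;> omega
    rw [this]; ring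
  rw [hj', hk', hg]

lemma diag {M : Type*} [AddCommGroup M] [Module ℤ M]
    (B : LinearMap.BilinForm ℤ M) (hsymm : B.IsSymm) (n : ℕ) (G : M) (e : Fin n → M)
    (hG : B G G = -1)
    (he : ∀ j, B (e j) (e j) = -2)
    (hGe0 : ∀ j : Fin n, (j:ℕ) = 0 → B G (e j) = 1)
    (hGej : ∀ j : Fin n, 1 ≤ (j:ℕ) → B G (e j) = 0)
    (hadj : ∀ j k : Fin n, ((j:ℕ)+1 = (k:ℕ) ∨ (k:ℕ)+1 = (j:ℕ)) → B (e j) (e k) = 1)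
    (hfar : ∀ j k : Fin n, ((j:ℕ)+2 ≤ (k:ℕ) ∨ (k:ℕ)+2 ≤ (j:ℕ)) → B (e j) (e k) = 0) :
    B (((n:ℤ)+1) • G + ∑ j : Fin n, ((n:ℤ)-(j:ℕ)) • e j)
      (((n:ℤ)+1) • G + ∑ j : Fin n, ((n:ℤ)-(j:ℕ)) • e j) = -((n:ℤ)+1) := by
  have hGe : ∑ j : Fin n, ((n:ℤ)-(j:ℕ)) * B G (e j) = n := by
    have h : ∀ j : Fin n, ((n:ℤ)-(j:ℕ)) * B G (e j)
        = if (j:ℕ) = 0 then (n:ℤ) else 0 := by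
      intro j
      by_cases h : (j:ℕ) = 0
      · rw [hGe0 j h, if_pos h, h]; push_cast; ring
      · rw [hGej j (by omega), if_neg h]; ring
    rw [Finset.sum_congr rfl fun j _ => h j, Fin.sum_univ_eq_sum_range (fun j => if j = 0 then (n:ℤ) else 0)]
    cases n with
    | zero => simp
    | succ m => simp
  have heG : ∑ j : Fin n, ((n:ℤ)-(j:ℕ)) * B (e j) G = n := by
    calc ∑ j : Fin n, ((n:ℤ)-(j:ℕ)) * B (e j) G
        = ∑ j : Fin n, ((n:ℤ)-(j:ℕ)) * B G (e j) := Finset.sum_congr rfl fun j _ => by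
          rw [show B (e j) G = B G (e j) from (hsymm.eq G (e j)).symm]
      _ = n := hGe
  have hee : ∑ j : Fin n, ∑ k : Fin n, ((n:ℤ)-(j:ℕ))*((n:ℤ)-(k:ℕ)) * B (e j) (e k)
      = -(n*(n+1)) := by
    have h : ∀ j k : Fin n, B (e j) (e k) = gg (j:ℕ) (k:ℕ) := by
      intro j k
      rcases Nat.lt_trichotomy (j:ℕ) (k:ℕ) with h1 | h1 | h1
      · rcases Nat.lt_or_ge ((j:ℕ)+1) (k:ℕ) with h2 | h2
        · rw [hfar j k (Or.inl (by omega))]; simp only [gg]; split_ifs <;> omega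
        · rw [hadj j k (Or.inl (by omega))]; simp only [gg]; split_ifs <;> omega
      · have : j = k := Fin.ext h1
        subst this; rw [he j]; simp [gg]
      · rcases Nat.lt_or_ge ((k:ℕ)+1) (j:ℕ) with h2 | h2
        · rw [hfar j k (Or.inr (by omega))]; simp only [gg]; split_ifs <;> omega
        · rw [hadj j k (Or.inr (by omega))]; simp only [gg]; split_ifs <;> omega
    have h2 : ∀ j : Fin n, (∑ k : Fin n, ((n:ℤ)-(j:ℕ))*((n:ℤ)-(k:ℕ)) * B (e j) (e k))
        = ∑ k ∈ Finset.range n, ((n:ℤ)-(j:ℕ))*((n:ℤ)-(k:ℕ))*gg (j:ℕ) k := by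
      intro j
      rw [← Fin.sum_univ_eq_sum_range (fun k => ((n:ℤ)-(j:ℕ))*((n:ℤ)-(k:ℕ))*gg (j:ℕ) k) n]
      exact Finset.sum_congr rfl fun k _ => by rw [h j k]
    rw [Finset.sum_congr rfl fun j _ => h2 j,
      Fin.sum_univ_eq_sum_range (fun j => ∑ k ∈ Finset.range n, ((n:ℤ)-(j:ℕ))*((n:ℤ)-(k:ℕ))*gg j k) n,
      sumA' n]
  simp only [LinearMap.BilinForm.add_left, LinearMap.BilinForm.add_right,
    LinearMap.BilinForm.sum_left, LinearMap.BilinForm.sum_right,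
    map_zsmul, LinearMap.smul_apply, smul_eq_mul]
  have key : ∑ x : Fin n, ((n:ℤ)-(x:ℕ)) * (((n:ℤ)+1) * B G (e x) + ∑ y : Fin n, ((n:ℤ)-(y:ℕ)) * B (e y) (e x))
      = ((n:ℤ)+1) * (n:ℤ) + -((n:ℤ)*((n:ℤ)+1)) := by
    have h1 : ∀ x : Fin n, ((n:ℤ)-(x:ℕ)) * (((n:ℤ)+1) * B G (e x) + ∑ y : Fin n, ((n:ℤ)-(y:ℕ)) * B (e y) (e x))
        = ((n:ℤ)+1) * (((n:ℤ)-(x:ℕ)) * B G (e x)) + ∑ y : Fin n, ((n:ℤ)-(y:ℕ))*((n:ℤ)-(x:ℕ)) * B (e y) (e x) := by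
      intro x
      rw [mul_add, Finset.mul_sum]
      congr 1
      · ring
      · exact Finset.sum_congr rfl fun y _ => by ring
    rw [Finset.sum_congr rfl fun x _ => h1 x, Finset.sum_add_distrib, ← Finset.mul_sum, hGe]
    congr 1
    rw [Finset.sum_comm]
    exact hee
  rw [hG, heG, key]
  ring

lemma cross {M : Type*} [AddCommGroup M] [Module ℤ M]
    (B : LinearMap.BilinForm ℤ M) (n m : ℕ) (G G' : M) (e : Fin n → M) (e' : Fin m → M)
    (h1 : B G G' = 0) (h2 : ∀ j, B G (e' j) = 0) (h3 : ∀ j, B (e j) G' = 0)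
    (h4 : ∀ j j', B (e j) (e' j') = 0) :
    B (((n:ℤ)+1) • G + ∑ j : Fin n, ((n:ℤ)-(j:ℕ)) • e j)
      (((m:ℤ)+1) • G' + ∑ j : Fin m, ((m:ℤ)-(j:ℕ)) • e' j) = 0 := by
  simp only [LinearMap.BilinForm.add_left, LinearMap.BilinForm.add_right,
    LinearMap.BilinForm.sum_left, LinearMap.BilinForm.sum_right,
    map_zsmul, LinearMap.smul_apply, smul_eq_mul, h1, h2, h3, h4,
    mul_zero, add_zero, zero_add, Finset.sum_const_zero]

/-- Self-intersection of the negative part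
`N₁ = Σᵢ [(l(i)+1)Γᵢ + Σ_{j=1}^{l(i)} (l(i)−j+1)E_{i,j}]`
of the Zariski–Fujita decomposition of `C + 2K_S`:
the `Γᵢ` are disjoint `(-1)`-curves, each with a chain of `(-2)`-curves
`E_{i,1},…,E_{i,l(i)}` attached, chains with different indices being disjoint.
Then `N₁² = −Σᵢ (l(i)+1)`. -/
theorem stmt_1 {M : Type*} [AddCommGroup M] [Module ℤ M]
    (B : LinearMap.BilinForm ℤ M) (hsymm : B.IsSymm)
    (s : ℕ) (l : Fin s → ℕ) (Γ : Fin s → M) (E : (i : Fin s) → Fin (l i) → M)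
    (hΓ : ∀ i, B (Γ i) (Γ i) = -1)
    (hE : ∀ i, ∀ j : Fin (l i), B (E i j) (E i j) = -2)
    (hΓE1 : ∀ i, ∀ j : Fin (l i), (j : ℕ) = 0 → B (Γ i) (E i j) = 1)
    (hΓEj : ∀ i, ∀ j : Fin (l i), 1 ≤ (j : ℕ) → B (Γ i) (E i j) = 0)
    (hadj : ∀ i, ∀ j k : Fin (l i),
      ((j : ℕ) + 1 = (k : ℕ) ∨ (k : ℕ) + 1 = (j : ℕ)) → B (E i j) (E i k) = 1)
    (hfar : ∀ i, ∀ j k : Fin (l i),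
      ((j : ℕ) + 2 ≤ (k : ℕ) ∨ (k : ℕ) + 2 ≤ (j : ℕ)) → B (E i j) (E i k) = 0)
    (hΓΓ : ∀ i k : Fin s, i ≠ k → B (Γ i) (Γ k) = 0)
    (hΓE : ∀ i k : Fin s, i ≠ k → ∀ j : Fin (l k), B (Γ i) (E k j) = 0)
    (hEE : ∀ i k : Fin s, i ≠ k → ∀ (j : Fin (l i)) (j' : Fin (l k)),
      B (E i j) (E k j') = 0) :
    B (∑ i : Fin s, (((l i : ℤ) + 1) • Γ i +
        ∑ j : Fin (l i), ((l i : ℤ) - (j : ℕ)) • E i j))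
      (∑ i : Fin s, (((l i : ℤ) + 1) • Γ i +
        ∑ j : Fin (l i), ((l i : ℤ) - (j : ℕ)) • E i j))
      = -(∑ i : Fin s, ((l i : ℤ) + 1)) := by
  set N : Fin s → M := fun i => ((l i : ℤ) + 1) • Γ i +
      ∑ j : Fin (l i), ((l i : ℤ) - (j : ℕ)) • E i j with hN
  calc B (∑ i : Fin s, N i) (∑ i : Fin s, N i)
      = ∑ i : Fin s, ∑ k : Fin s, B (N i) (N k) := by
        rw [LinearMap.BilinForm.sum_left]
        exact Finset.sum_congr rfl fun i _ => LinearMap.BilinForm.sum_right _ _ _ _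
    _ = ∑ i : Fin s, B (N i) (N i) := Finset.sum_congr rfl fun i _ => by
        refine Finset.sum_eq_single i (fun k _ hk => ?_) (by simp)
        have hik : i ≠ k := fun h => hk h.symm
        exact cross B (l i) (l k) (Γ i) (Γ k) (E i) (E k)
          (hΓΓ i k hik) (hΓE i k hik)
          (fun j => by rw [← hsymm.eq (Γ k) (E i j)]; exact hΓE k i hik.symm j)
          (hEE i k hik)
    _ = ∑ i : Fin s, -((l i : ℤ) + 1) := Finset.sum_congr rfl fun i _ =>
        diag B hsymm (l i) (Γ i) (E i) (hΓ i) (hE i) (hΓE1 i) (hΓEj i) (hadj i) (hfar i)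
    _ = -(∑ i : Fin s, ((l i : ℤ) + 1)) := by rw [Finset.sum_neg_distrib]
end

section
/- Let a, b be real numbers with b > 0 and a ≥ 5b, and define q(x) = (a − 4b)x² − (a − 2b)x + (2b + 2). If x is a real number with q(x) = 0, then either 0 < x < 1 or 1 < x < 2. -/
/-- Proposition 5.1 (ii): with `b > 0` and `a ≥ 5b`, any real root of the quadratic
`q(x) = (a−4b)x² − (a−2b)x + (2b+2)` lies in `(0,1) ∪ (1,2)`. -/
theorem stmt_7 (a b : ℝ) (hb : b > 0) (hab : a ≥ 5 * b)
    (q : ℝ → ℝ)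
    (hq : ∀ x : ℝ, q x = (a - 4 * b) * x ^ 2 - (a - 2 * b) * x + (2 * b + 2))
    (x : ℝ) (hx : q x = 0) :
    (0 < x ∧ x < 1) ∨ (1 < x ∧ x < 2) := by
  rw [hq] at hx
  have hx0 : 0 < x := by
    by_contra h
    push_neg at h
    nlinarith [mul_nonneg (sub_nonneg.2 hab) (sq_nonneg x), sq_nonneg x,
      mul_nonneg hb.le (sq_nonneg x), mul_nonpos_of_nonneg_of_nonpos hb.le h]
  have hx2 : x < 2 := by
    by_contra h
    push_neg at h
    nlinarith [mul_nonneg hb.le (sq_nonneg (x - 2)), sq_nonneg (x - 2),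
      mul_nonneg (sub_nonneg.2 hab) (sq_nonneg (x - 2)),
      mul_nonneg (mul_nonneg hb.le (by linarith : (0:ℝ) ≤ x - 2)) (by linarith : (0:ℝ) ≤ x)]
  have hx1 : x ≠ 1 := by
    intro h; rw [h] at hx; norm_num at hx; linarith
  rcases lt_or_gt_of_ne hx1 with h | h
  · exact Or.inl ⟨hx0, h⟩
  · exact Or.inr ⟨h, hx2⟩
end

section
/- There do not exist integers d, d₀, l₀₁, l₀₂, m₀ with d ≥ 12, d₀ ≥ 1, l₀₁ ≥ 0, l₀₂ ≥ 0, m₀ ≥ 0 satisfying simultaneously: d₀² − l₀₁ − l₀₂ − 4m₀ = −1, d₀² − 3d₀ + 2 = 2m₀, and d₀·d − l₀₁ − 2l₀₂ − 4m₀ = 0. -/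
/-- Section 4: a nodal pencil of plane curves of degree `d ≥ 12` gives a relatively
minimal fibration: there is no component `D₀` of degree `d₀ ≥ 1` whose proper
transform is a vertical `(−1)`-curve, i.e. the system of three numerical equations
has no solution. -/
theorem stmt_12 :
    ¬ ∃ d d₀ l₀₁ l₀₂ m₀ : ℤ, 12 ≤ d ∧ 1 ≤ d₀ ∧ 0 ≤ l₀₁ ∧ 0 ≤ l₀₂ ∧ 0 ≤ m₀ ∧
      d₀ ^ 2 - l₀₁ - l₀₂ - 4 * m₀ = -1 ∧
      d₀ ^ 2 - 3 * d₀ + 2 = 2 * m₀ ∧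
      d₀ * d - l₀₁ - 2 * l₀₂ - 4 * m₀ = 0 := by
  rintro ⟨d, d₀, l₀₁, l₀₂, m₀, hd, hd0, h1, h2, h3, e1, e2, e3⟩
  -- l₀₁ = 6d₀ - 2 - d₀*d ≥ 0, but d₀*(d-6) ≥ 6 since d₀ ≥ 1, d ≥ 12
  nlinarith [mul_le_mul_of_nonneg_left hd (by linarith : (0:ℤ) ≤ d₀)]
end
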